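/- The number of collinear triples of points in the n × n grid equals 2·∑_{a=1}^{n−1} ∑_{b=1}^{n−1} (n−a)(n−b)·gcd(a,b) − (1/6)·n²·(n²−1). -/

import Mathlib

def Collinear3 (p q r : ℤ × ℤ) : Prop :=
  (q.1 - p.1) * (r.2 - p.2) - (q.2 - p.2) * (r.1 - p.1) = 0

/-- The `n × n` grid as a finite set of lattice points. -/
def gridF (n : ℕ) : Finset (ℤ × ℤ) :=
  (Finset.range n ×ˢ Finset.range n).image (fun p => ((p.1 : ℤ), (p.2 : ℤ)))

/-- `m` lies strictly between `u` and `v` on the segment joining them: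
collinearity plus positivity of the dot product `(m-u)·(v-m)`. -/
def StrBtw (u m v : ℤ × ℤ) : Prop :=
  Collinear3 u m v ∧
    0 < (m.1 - u.1) * (v.1 - m.1) + (m.2 - u.2) * (v.2 - m.2)

instance StrBtw.dec : ∀ u m v, Decidable (StrBtw u m v) := fun u m v => by
  unfold StrBtw Collinear3; infer_instance

/-- Ordered triples `(u, m, v)` of grid points with `m` strictly between. -/
def tripleS (n : ℕ) : Finset ((ℤ × ℤ) × (ℤ × ℤ) × (ℤ × ℤ)) :=
  (gridF n ×ˢ gridF n ×ˢ gridF n).filter (fun t => StrBtw t.1 t.2.1 t.2.2)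

lemma mem_gridF {n : ℕ} {x : ℤ × ℤ} :
    x ∈ gridF n ↔ 0 ≤ x.1 ∧ x.1 < n ∧ 0 ≤ x.2 ∧ x.2 < n := by
  constructor
  · intro hx
    simp only [gridF, Finset.mem_image, Finset.mem_product, Finset.mem_range] at hx
    obtain ⟨⟨i, j⟩, ⟨hi, hj⟩, rfl⟩ := hx
    exact ⟨Int.ofNat_nonneg i, by simpa using hi, Int.ofNat_nonneg j, by simpa using hj⟩
  · rintro ⟨h1, h2, h3, h4⟩
    simp only [gridF, Finset.mem_image, Finset.mem_product, Finset.mem_range]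
    refine ⟨⟨x.1.toNat, x.2.toNat⟩, ⟨by omega, by omega⟩, ?_⟩
    simp [Int.toNat_of_nonneg h1, Int.toNat_of_nonneg h3]

lemma coprime_solve {a b x y : ℤ} (h : IsCoprime a b) (e : a * y = b * x) :
    ∃ k : ℤ, x = k * a ∧ y = k * b := by
  rcases eq_or_ne a 0 with rfl | ha
  · have hb : IsUnit b := by
      rcases h with ⟨u, v, huv⟩
      exact IsUnit.of_mul_eq_one (a := b) v (by linarith [huv])
    have hx : x = 0 := by
      rcases hb with ⟨u, rfl⟩
      have := e; simp at this; exact this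
    refine ⟨y * b, by simp [hx], ?_⟩
    rcases Int.isUnit_iff.mp hb with rfl | rfl <;> ring
  · have hdvd : a ∣ x := by
      have : a ∣ b * x := ⟨y, by linarith⟩
      exact IsCoprime.dvd_of_dvd_mul_left h this
    obtain ⟨k, rfl⟩ := hdvd
    refine ⟨k, by ring, ?_⟩
    have : a * y = a * (k * b) := by ring_nf; linarith [e]
    exact mul_left_cancel₀ ha this

lemma exists_primitive {p q : ℤ × ℤ} (h : p ≠ q) :
    ∃ a b : ℤ, IsCoprime a b ∧
      q.1 - p.1 = (Int.gcd (q.1 - p.1) (q.2 - p.2) : ℤ) * a ∧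
      q.2 - p.2 = (Int.gcd (q.1 - p.1) (q.2 - p.2) : ℤ) * b ∧
      0 < (Int.gcd (q.1 - p.1) (q.2 - p.2) : ℤ) := by
  set dx := q.1 - p.1
  set dy := q.2 - p.2
  have hne : dx ≠ 0 ∨ dy ≠ 0 := by
    by_contra hc
    push_neg at hc
    exact h (Prod.ext (by omega) (by omega))
  have hg : 0 < Int.gcd dx dy := Int.gcd_pos_iff.mpr hne
  refine ⟨dx / Int.gcd dx dy, dy / Int.gcd dx dy, ?_, ?_, ?_, by exact_mod_cast hg⟩
  · rw [Int.isCoprime_iff_gcd_eq_one]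
    exact Int.gcd_div_gcd_div_gcd hg
  · rw [Int.mul_ediv_cancel' (Int.gcd_dvd_left _ _)]
  · rw [Int.mul_ediv_cancel' (Int.gcd_dvd_right _ _)]

lemma coprime_sq_pos {a b : ℤ} (h : IsCoprime a b) : 0 < a ^ 2 + b ^ 2 := by
  rcases eq_or_ne a 0 with rfl | ha
  · rcases eq_or_ne b 0 with rfl | hb
    · simpa using h.ne_zero_or_ne_zero.elim (fun h => absurd rfl h) (fun h => absurd rfl h)
    · positivity
  · positivity

set_option maxHeartbeats 1000000 in
/-- Counting lattice points strictly between two distinct grid points. -/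
lemma card_between {n : ℕ} {p q : ℤ × ℤ} (hp : p ∈ gridF n) (hq : q ∈ gridF n)
    (hne : p ≠ q) :
    ((gridF n).filter (fun m => StrBtw p m q)).card
      = Int.gcd (q.1 - p.1) (q.2 - p.2) - 1 := by
  obtain ⟨a, b, hco, hda, hdb, hgpos⟩ := exists_primitive hne
  set g : ℤ := (Int.gcd (q.1 - p.1) (q.2 - p.2) : ℤ) with hgdef
  have habpos := coprime_sq_pos hco
  rw [mem_gridF] at hp hq
  have key : (Finset.Ico (1:ℤ) g).card
      = ((gridF n).filter (fun m => StrBtw p m q)).card := by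
    apply Finset.card_bij (fun k _ => ((p.1 + k * a, p.2 + k * b) : ℤ × ℤ))
    · intro k hk
      rw [Finset.mem_Ico] at hk
      obtain ⟨hk1, hk2⟩ := hk
      rw [Finset.mem_filter]
      refine ⟨?_, ?_, ?_⟩
      · rw [mem_gridF]
        dsimp only
        rcases le_or_gt 0 a with haa | haa <;> rcases le_or_gt 0 b with hbb | hbb <;>
          refine ⟨by nlinarith, by nlinarith, by nlinarith, by nlinarith⟩
      · show _ - _ = _
        dsimp only
        rw [hda, hdb]; ring
      · dsimp only
        have hpos : 0 < k * (g - k) * (a ^ 2 + b ^ 2) :=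
          mul_pos (mul_pos (by omega) (by omega)) habpos
        have hq1 : q.1 = p.1 + g * a := by linarith [hda]
        have hq2 : q.2 = p.2 + g * b := by linarith [hdb]
        rw [hq1, hq2]
        nlinarith [hpos]
    · intro k1 h1 k2 h2 he
      have h1' : k1 * a = k2 * a := by
        have := congrArg Prod.fst he; dsimp at this; linarith
      have h2' : k1 * b = k2 * b := by
        have := congrArg Prod.snd he; dsimp at this; linarith
      rcases eq_or_ne a 0 with rfl | ha
      · have hb : b ≠ 0 := by
          intro hb0
          rw [hb0] at habpos
          simp at habpos
        exact mul_right_cancel₀ hb h2'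
      · exact mul_right_cancel₀ ha h1'
    · intro m hm
      rw [Finset.mem_filter] at hm
      obtain ⟨hmg, hcol, hdot⟩ := hm
      have hcol' : a * (m.2 - p.2) = b * (m.1 - p.1) := by
        have h0 : (m.1 - p.1) * (q.2 - p.2) - (m.2 - p.2) * (q.1 - p.1) = 0 := hcol
        rw [hda, hdb] at h0
        have : g * (a * (m.2 - p.2) - b * (m.1 - p.1)) = 0 := by linarith [h0]
        have := mul_eq_zero.mp this
        rcases this with h | h
        · exact absurd h hgpos.ne'
        · linarith
      obtain ⟨k, hk1, hk2⟩ := coprime_solve hco hcol'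
      have hdot' : 0 < k * (g - k) * (a ^ 2 + b ^ 2) := by
        have : (m.1 - p.1) * (q.1 - m.1) + (m.2 - p.2) * (q.2 - m.2)
            = k * (g - k) * (a ^ 2 + b ^ 2) := by
          have e1 : q.1 - m.1 = (g - k) * a := by linarith [hda, hk1]
          have e2 : q.2 - m.2 = (g - k) * b := by linarith [hdb, hk2]
          rw [hk1, hk2, e1, e2]; ring
        linarith [hdot, this]
      have hkg : 0 < k * (g - k) := by
        by_contra hc
        push_neg at hc
        nlinarith [hdot', habpos]
      refine ⟨k, ?_, ?_⟩
      · rw [Finset.mem_Ico]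
        constructor <;> nlinarith
      · have : p.1 + k * a = m.1 := by linarith [hk1]
        have h2 : p.2 + k * b = m.2 := by linarith [hk2]
        exact Prod.ext this h2
  rw [← key, Int.card_Ico]
  omega

lemma strbtw_comm {u m v : ℤ × ℤ} : StrBtw u m v ↔ StrBtw v m u := by
  unfold StrBtw Collinear3
  constructor <;> rintro ⟨h1, h2⟩ <;> exact ⟨by linarith [h1], by nlinarith [h2]⟩

lemma strbtw_ne {u m v : ℤ × ℤ} (h : StrBtw u m v) : u ≠ m ∧ m ≠ v ∧ u ≠ v := by
  obtain ⟨-, h2⟩ := h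
  refine ⟨?_, ?_, ?_⟩
  · rintro rfl; simp at h2
  · rintro rfl; simp at h2
  · rintro rfl
    nlinarith [h2, sq_nonneg (u.1 - m.1), sq_nonneg (u.2 - m.2)]

lemma strbtw_irrefl {u m : ℤ × ℤ} : ¬ StrBtw u m u := by
  rintro ⟨-, h2⟩
  nlinarith [h2, sq_nonneg (m.1 - u.1), sq_nonneg (m.2 - u.2)]

lemma strbtw_excl1 {p q r : ℤ × ℤ} (h : StrBtw p q r) : ¬ StrBtw q p r := by
  rintro ⟨-, h2⟩
  obtain ⟨-, h1⟩ := h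
  nlinarith [h1, h2, sq_nonneg (q.1 - p.1), sq_nonneg (q.2 - p.2)]

lemma strbtw_excl2 {p q r : ℤ × ℤ} (h : StrBtw p q r) : ¬ StrBtw p r q := by
  rintro ⟨-, h2⟩
  obtain ⟨-, h1⟩ := h
  nlinarith [h1, h2, sq_nonneg (r.1 - q.1), sq_nonneg (r.2 - q.2)]

lemma middle_exists {p q r : ℤ × ℤ} (hpq : p ≠ q) (hpr : p ≠ r) (hqr : q ≠ r)
    (hc : Collinear3 p q r) :
    StrBtw q p r ∨ StrBtw p q r ∨ StrBtw p r q := by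
  obtain ⟨a, b, hco, hda, hdb, hgpos⟩ := exists_primitive hpq
  set g : ℤ := (Int.gcd (q.1 - p.1) (q.2 - p.2) : ℤ) with hgdef
  have habpos := coprime_sq_pos hco
  have hcol' : a * (r.2 - p.2) = b * (r.1 - p.1) := by
    have h0 : (q.1 - p.1) * (r.2 - p.2) - (q.2 - p.2) * (r.1 - p.1) = 0 := hc
    rw [hda, hdb] at h0
    have h1 : g * (a * (r.2 - p.2) - b * (r.1 - p.1)) = 0 := by linarith [h0]
    rcases mul_eq_zero.mp h1 with h | h
    · exact absurd h hgpos.ne'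
    · linarith
  obtain ⟨k, hk1, hk2⟩ := coprime_solve hco hcol'
  have hq1 : q.1 = p.1 + g * a := by linarith [hda]
  have hq2 : q.2 = p.2 + g * b := by linarith [hdb]
  have hr1 : r.1 = p.1 + k * a := by linarith [hk1]
  have hr2 : r.2 = p.2 + k * b := by linarith [hk2]
  have hk0 : k ≠ 0 := by
    rintro rfl
    exact hpr (Prod.ext (by linarith) (by linarith))
  have hkg : k ≠ g := by
    rintro rfl
    exact hqr (Prod.ext (by linarith) (by linarith))
  rcases lt_trichotomy k 0 with hk | hk | hk
  · left
    constructor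
    · show _ - _ = 0
      rw [hq1, hq2, hr1, hr2]; ring
    · have : 0 < (-k) * g * (a ^ 2 + b ^ 2) :=
        mul_pos (mul_pos (by omega) hgpos) habpos
      rw [hq1, hq2, hr1, hr2]; nlinarith [this]
  · exact absurd hk hk0
  · rcases lt_trichotomy k g with hkg' | hkg' | hkg'
    · right; right
      constructor
      · show _ - _ = 0
        rw [hq1, hq2, hr1, hr2]; ring
      · have : 0 < k * (g - k) * (a ^ 2 + b ^ 2) :=
          mul_pos (mul_pos (by omega) (by omega)) habpos
        rw [hq1, hq2, hr1, hr2]; nlinarith [this]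
    · exact absurd hkg' hkg
    · right; left
      refine ⟨hc, ?_⟩
      have : 0 < g * (k - g) * (a ^ 2 + b ^ 2) :=
        mul_pos (mul_pos hgpos (by omega)) habpos
      rw [hq1, hq2, hr1, hr2]; nlinarith [this]

lemma fiber_eq {n : ℕ} {x y z : ℤ × ℤ} (hx : x ∈ gridF n) (hy : y ∈ gridF n)
    (hz : z ∈ gridF n) (hb : StrBtw x y z) :
    (tripleS n).filter (fun t => ({t.1, t.2.1, t.2.2} : Finset (ℤ × ℤ)) = {x, y, z})
      = {(x, y, z), (z, y, x)} := by
  obtain ⟨hxy, hyz, hxz⟩ := strbtw_ne hb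
  have N1 : ¬ StrBtw y x z := strbtw_excl1 hb
  have N2 : ¬ StrBtw x z y := strbtw_excl2 hb
  have N3 : ¬ StrBtw z x y := fun h => N1 (strbtw_comm.mp h)
  have N4 : ¬ StrBtw y z x := fun h => N2 (strbtw_comm.mp h)
  ext ⟨u, m, v⟩
  simp only [tripleS, Finset.mem_filter, Finset.mem_product, Finset.mem_insert,
    Finset.mem_singleton, Prod.mk.injEq]
  constructor
  · rintro ⟨⟨⟨hu, hm, hv⟩, hbt⟩, hset⟩
    obtain ⟨hum, hmv, huv⟩ := strbtw_ne hbt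
    have hu' : u = x ∨ u = y ∨ u = z := by
      have : u ∈ ({x, y, z} : Finset (ℤ × ℤ)) := by rw [← hset]; simp
      simpa using this
    have hm' : m = x ∨ m = y ∨ m = z := by
      have : m ∈ ({x, y, z} : Finset (ℤ × ℤ)) := by rw [← hset]; simp
      simpa using this
    have hv' : v = x ∨ v = y ∨ v = z := by
      have : v ∈ ({x, y, z} : Finset (ℤ × ℤ)) := by rw [← hset]; simp
      simpa using this
    rcases hu' with rfl | rfl | rfl <;> rcases hm' with rfl | rfl | rfl <;>
      rcases hv' with rfl | rfl | rfl <;> simp_all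
  · rintro (⟨rfl, rfl, rfl⟩ | ⟨rfl, rfl, rfl⟩)
    · exact ⟨⟨⟨hx, hy, hz⟩, hb⟩, rfl⟩
    · refine ⟨⟨⟨hz, hy, hx⟩, strbtw_comm.mp hb⟩, ?_⟩
      ext w; simp; tauto

section SumLemmas
open Finset

lemma sum_shift (n : ℕ) (h : ℕ → ℚ) :
    ∑ i ∈ range n, h (((n : ℤ) - i).natAbs) = ∑ a ∈ Icc 1 n, h a := by
  apply Finset.sum_nbij' (fun i => n - i) (fun a => n - a) <;>
    intro a ha <;> simp only [Finset.mem_range, Finset.mem_Icc] at * <;>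
    try omega
  congr 1
  omega

lemma sum_absdiff (n : ℕ) (h : ℕ → ℚ) :
    ∑ i ∈ range n, ∑ k ∈ range n, h (((k : ℤ) - (i : ℤ)).natAbs)
      = n * h 0 + ∑ a ∈ Icc 1 n, 2 * ((n : ℚ) - a) * h a := by
  induction n with
  | zero => simp
  | succ n ih =>
    simp only [Finset.sum_range_succ]
    rw [Finset.sum_add_distrib, ih]
    have e1 : ∑ i ∈ range n, h ((((n:ℕ) : ℤ) - (i:ℕ)).natAbs) = ∑ a ∈ Icc 1 n, h a :=
      sum_shift n h
    have e2 : ∑ k ∈ range n, h ((((k:ℕ) : ℤ) - ((n:ℕ) : ℤ)).natAbs) = ∑ a ∈ Icc 1 n, h a := by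
      rw [← e1]
      exact Finset.sum_congr rfl fun i hi => by congr 1; omega
    rw [e1, e2]
    have e0 : (((n:ℕ) : ℤ) - ((n:ℕ) : ℤ)).natAbs = 0 := by simp
    rw [e0]
    rw [Finset.sum_Icc_succ_top (show 1 ≤ n + 1 by omega)]
    have e3 : ∑ a ∈ Icc 1 (n : ℕ), 2 * (((n : ℕ) + 1 : ℚ) - a) * h a
        = (∑ a ∈ Icc 1 (n : ℕ), 2 * ((n : ℚ) - a) * h a) + 2 * ∑ a ∈ Icc 1 n, h a := by
      rw [Finset.mul_sum, ← Finset.sum_add_distrib]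
      exact Finset.sum_congr rfl fun a _ => by ring
    push_cast
    rw [e3]
    push_cast
    ring

lemma gauss1 (n : ℕ) : ∑ a ∈ Icc 1 n, (a : ℚ) = n * (n + 1) / 2 := by
  induction n with
  | zero => simp
  | succ n ih =>
    rw [Finset.sum_Icc_succ_top (by omega), ih]
    push_cast; ring

lemma gauss2 (n : ℕ) : ∑ a ∈ Icc 1 n, (a : ℚ) ^ 2 = n * (n + 1) * (2 * n + 1) / 6 := by
  induction n with
  | zero => simp
  | succ n ih =>
    rw [Finset.sum_Icc_succ_top (by omega), ih]
    push_cast; ring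

lemma sumB (n : ℕ) : ∑ a ∈ Icc 1 n, ((n : ℚ) - a) * a = n * ((n:ℚ) ^ 2 - 1) / 6 := by
  have : ∀ a ∈ Icc 1 n, ((n : ℚ) - a) * a = n * a - (a:ℚ)^2 := fun a _ => by ring
  rw [Finset.sum_congr rfl this, Finset.sum_sub_distrib, ← Finset.mul_sum, gauss1, gauss2]
  ring

lemma sum_drop {m : ℕ} (f : ℕ → ℚ) (hf : f (m + 1) = 0) :
    ∑ a ∈ Icc 1 (m + 1), f a = ∑ a ∈ Icc 1 m, f a := by
  rw [Finset.sum_Icc_succ_top (by omega), hf, add_zero]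

lemma gcd_cast_sub_one {w w' : ℕ × ℕ} :
    ((Int.gcd ((w'.1 : ℤ) - w.1) ((w'.2 : ℤ) - w.2) - 1 : ℕ) : ℚ)
      = (Int.gcd ((w'.1 : ℤ) - w.1) ((w'.2 : ℤ) - w.2) : ℚ) - 1
        + (if w = w' then 1 else 0) := by
  rcases eq_or_ne w w' with rfl | hne
  · simp
  · have hpos : 0 < Int.gcd ((w'.1 : ℤ) - w.1) ((w'.2 : ℤ) - w.2) := by
      rw [Int.gcd_pos_iff]
      by_contra hc
      push_neg at hc
      apply hne
      ext <;> omega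
    rw [if_neg hne, Nat.cast_sub (by omega)]
    push_cast
    ring

lemma arith (n : ℕ) :
    ((∑ w ∈ range n ×ˢ range n, ∑ w' ∈ range n ×ˢ range n,
        (Int.gcd ((w'.1 : ℤ) - w.1) ((w'.2 : ℤ) - w.2) - 1) : ℕ) : ℚ)
      = 2 * (2 * ∑ a ∈ Icc 1 (n - 1), ∑ b ∈ Icc 1 (n - 1),
          ((n : ℚ) - a) * ((n : ℚ) - b) * (Nat.gcd a b : ℚ)
        - (n : ℚ) ^ 2 * ((n : ℚ) ^ 2 - 1) / 6) := by
  rcases n with _ | m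
  · simp
  set n := m + 1 with hn
  rw [Nat.cast_sum]
  simp only [Nat.cast_sum, gcd_cast_sub_one]
  simp only [Finset.sum_add_distrib, Finset.sum_sub_distrib, Finset.sum_const,
    Finset.card_product, Finset.card_range, nsmul_eq_mul, Finset.sum_ite_eq,
    Finset.mem_product, Finset.mem_range, and_self]
  have hone : ∑ x ∈ range n ×ˢ range n, (if x.1 < n ∧ x.2 < n then (1:ℚ) else 0)
      = ((n : ℚ) * n) := by
    rw [Finset.sum_congr rfl (fun x hx => if_pos (by
      simpa [Finset.mem_product] using hx))]
    simp [Finset.card_product, mul_comm]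
  have hgcdsum : (∑ w ∈ range n ×ˢ range n, ∑ w' ∈ range n ×ˢ range n,
        ((Int.gcd ((w'.1 : ℤ) - w.1) ((w'.2 : ℤ) - w.2) : ℕ) : ℚ))
      = 4 * (∑ a ∈ Icc 1 n, ∑ b ∈ Icc 1 n, ((n:ℚ)-a)*((n:ℚ)-b)*(Nat.gcd a b : ℚ))
        + 4 * n * (∑ a ∈ Icc 1 n, ((n:ℚ)-a)*(a:ℚ)) := by
    calc ∑ w ∈ range n ×ˢ range n, ∑ w' ∈ range n ×ˢ range n,
          ((Int.gcd ((w'.1 : ℤ) - w.1) ((w'.2 : ℤ) - w.2) : ℕ) : ℚ)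
        = ∑ i ∈ range n, ∑ j ∈ range n, ∑ k ∈ range n, ∑ l ∈ range n,
            ((Nat.gcd (((k:ℤ) - i).natAbs) (((l:ℤ) - j).natAbs) : ℕ) : ℚ) := by
          simp only [Finset.sum_product, Int.gcd]
      _ = ∑ i ∈ range n, ∑ k ∈ range n, ∑ j ∈ range n, ∑ l ∈ range n,
            ((Nat.gcd (((k:ℤ) - i).natAbs) (((l:ℤ) - j).natAbs) : ℕ) : ℚ) :=
          Finset.sum_congr rfl (fun i _ => Finset.sum_comm)
      _ = ∑ i ∈ range n, ∑ k ∈ range n,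
            ((n : ℚ) * (Nat.gcd (((k:ℤ) - i).natAbs) 0 : ℚ)
              + ∑ b ∈ Icc 1 n, 2 * ((n:ℚ) - b)
                  * (Nat.gcd (((k:ℤ) - i).natAbs) b : ℚ)) :=
          Finset.sum_congr rfl (fun i _ => Finset.sum_congr rfl (fun k _ =>
            sum_absdiff n (fun b => (Nat.gcd (((k:ℤ) - i).natAbs) b : ℚ))))
      _ = (n : ℚ) * ((n : ℚ) * (Nat.gcd 0 0 : ℚ)
              + ∑ b ∈ Icc 1 n, 2 * ((n:ℚ) - b) * (Nat.gcd 0 b : ℚ))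
            + ∑ a ∈ Icc 1 n, 2 * ((n:ℚ) - a) * ((n : ℚ) * (Nat.gcd a 0 : ℚ)
              + ∑ b ∈ Icc 1 n, 2 * ((n:ℚ) - b) * (Nat.gcd a b : ℚ)) :=
          sum_absdiff n (fun a => (n : ℚ) * (Nat.gcd a 0 : ℚ)
              + ∑ b ∈ Icc 1 n, 2 * ((n:ℚ) - b) * (Nat.gcd a b : ℚ))
      _ = (n : ℚ) * (∑ b ∈ Icc 1 n, 2 * ((n:ℚ) - b) * (b : ℚ))
            + ∑ a ∈ Icc 1 n, (2 * (n : ℚ) * (((n:ℚ) - a) * (a:ℚ))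
              + ∑ b ∈ Icc 1 n, 4 * (((n:ℚ)-a)*((n:ℚ)-b)*(Nat.gcd a b : ℚ))) := by
          simp only [Nat.gcd_zero_right, Nat.gcd_zero_left, Nat.cast_zero, mul_zero,
            zero_add]
          congr 1
          refine Finset.sum_congr rfl (fun a _ => ?_)
          rw [mul_add, Finset.mul_sum]
          congr 1
          · ring
          · exact Finset.sum_congr rfl fun b _ => by ring
      _ = 4 * (∑ a ∈ Icc 1 n, ∑ b ∈ Icc 1 n, ((n:ℚ)-a)*((n:ℚ)-b)*(Nat.gcd a b : ℚ))
            + 4 * n * (∑ a ∈ Icc 1 n, ((n:ℚ)-a)*(a:ℚ)) := by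
          rw [Finset.sum_add_distrib]
          have h1 : ∑ b ∈ Icc 1 n, 2 * ((n:ℚ) - b) * (b:ℚ)
              = 2 * ∑ b ∈ Icc 1 n, ((n:ℚ) - b) * (b:ℚ) := by
            rw [Finset.mul_sum]
            exact Finset.sum_congr rfl fun b _ => by ring
          have h2 : ∑ a ∈ Icc 1 n, ∑ b ∈ Icc 1 n, 4 * (((n:ℚ)-a)*((n:ℚ)-b)*(Nat.gcd a b : ℚ))
              = 4 * ∑ a ∈ Icc 1 n, ∑ b ∈ Icc 1 n, ((n:ℚ)-a)*((n:ℚ)-b)*(Nat.gcd a b : ℚ) := by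
            rw [Finset.mul_sum]
            exact Finset.sum_congr rfl fun a _ => by rw [Finset.mul_sum]
          have h3 : ∑ a ∈ Icc 1 n, 2 * (n:ℚ) * (((n:ℚ) - a) * (a:ℚ))
              = 2 * (n:ℚ) * ∑ a ∈ Icc 1 n, ((n:ℚ) - a) * (a:ℚ) := by
            rw [Finset.mul_sum]
          rw [h1, h2, h3]
          ring
  rw [hgcdsum, hone]
  have hm : n - 1 = m := by omega
  rw [hm]
  have hcast : ((n : ℕ) : ℚ) = (m : ℚ) + 1 := by rw [hn]; push_cast; ring
  have hdropA : (∑ a ∈ Icc 1 n, ∑ b ∈ Icc 1 n, ((n:ℚ)-a)*((n:ℚ)-b)*(Nat.gcd a b : ℚ))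
      = ∑ a ∈ Icc 1 m, ∑ b ∈ Icc 1 m, ((n:ℚ)-a)*((n:ℚ)-b)*(Nat.gcd a b : ℚ) := by
    rw [show Icc 1 n = Icc 1 (m + 1) from by rw [hn]]
    rw [sum_drop _ (Finset.sum_eq_zero fun b _ => by rw [hcast]; push_cast; ring)]
    exact Finset.sum_congr rfl fun a _ =>
      sum_drop _ (by rw [hcast]; push_cast; ring)
  rw [hdropA, sumB n]
  push_cast
  ring


end SumLemmas

lemma card_between' {n : ℕ} {u v : ℤ × ℤ} (hu : u ∈ gridF n) (hv : v ∈ gridF n) :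
    ((gridF n).filter (fun m => StrBtw u m v)).card
      = Int.gcd (v.1 - u.1) (v.2 - u.2) - 1 := by
  rcases eq_or_ne u v with rfl | hne
  · rw [Finset.filter_eq_empty_iff.mpr (fun m _ => strbtw_irrefl)]
    simp
  · exact card_between hu hv hne

lemma tripleS_card_pairs (n : ℕ) :
    (tripleS n).card = ∑ u ∈ gridF n, ∑ v ∈ gridF n,
      (Int.gcd (v.1 - u.1) (v.2 - u.2) - 1) := by
  rw [tripleS, Finset.card_filter]
  simp only [Finset.sum_product]
  refine Finset.sum_congr rfl fun u _ => ?_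
  rw [Finset.sum_comm]
  refine Finset.sum_congr rfl fun v hv => ?_
  rw [← Finset.card_filter]
  exact card_between' (by assumption) hv

lemma grid_pair_sum (n : ℕ) :
    (∑ u ∈ gridF n, ∑ v ∈ gridF n, (Int.gcd (v.1 - u.1) (v.2 - u.2) - 1))
      = ∑ w ∈ Finset.range n ×ˢ Finset.range n, ∑ w' ∈ Finset.range n ×ˢ Finset.range n,
          (Int.gcd ((w'.1 : ℤ) - w.1) ((w'.2 : ℤ) - w.2) - 1) := by
  have hinj : ∀ x ∈ Finset.range n ×ˢ Finset.range n,
      ∀ y ∈ Finset.range n ×ˢ Finset.range n,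
      (fun p : ℕ × ℕ => ((p.1 : ℤ), (p.2 : ℤ))) x
        = (fun p : ℕ × ℕ => ((p.1 : ℤ), (p.2 : ℤ))) y → x = y := by
    rintro ⟨x1, x2⟩ - ⟨y1, y2⟩ - h
    simp only [Prod.mk.injEq, Nat.cast_inj] at h
    exact Prod.ext h.1 h.2
  rw [gridF, Finset.sum_image hinj]
  exact Finset.sum_congr rfl fun w _ => by rw [Finset.sum_image hinj]

open Classical in
theorem collinear_triple_count (n : ℕ) :
    ((((gridF n).powersetCard 3).filter (fun s =>
        ∃ p ∈ s, ∃ q ∈ s, ∃ r ∈ s, p ≠ q ∧ p ≠ r ∧ q ≠ r ∧ Collinear3 p q r)).card : ℚ) =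
      2 * ∑ a ∈ Finset.Icc 1 (n - 1), ∑ b ∈ Finset.Icc 1 (n - 1),
          ((n : ℚ) - a) * ((n : ℚ) - b) * (Nat.gcd a b : ℚ)
        - (n : ℚ) ^ 2 * ((n : ℚ) ^ 2 - 1) / 6 := by
  set T := (((gridF n).powersetCard 3).filter (fun s =>
      ∃ p ∈ s, ∃ q ∈ s, ∃ r ∈ s, p ≠ q ∧ p ≠ r ∧ q ≠ r ∧ Collinear3 p q r)) with hT
  have hmap : ∀ t ∈ tripleS n, ({t.1, t.2.1, t.2.2} : Finset (ℤ × ℤ)) ∈ T := by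
    rintro ⟨u, m, v⟩ ht
    simp only [tripleS, Finset.mem_filter, Finset.mem_product] at ht
    obtain ⟨⟨hu, hm, hv⟩, hb⟩ := ht
    obtain ⟨hum, hmv, huv⟩ := strbtw_ne hb
    rw [hT, Finset.mem_filter, Finset.mem_powersetCard]
    refine ⟨⟨?_, ?_⟩, ?_⟩
    · simp only [Finset.insert_subset_iff, Finset.singleton_subset_iff]
      exact ⟨hu, hm, hv⟩
    · exact Finset.card_eq_three.mpr ⟨u, m, v, hum, huv, hmv, rfl⟩
    · exact ⟨u, by simp, m, by simp, v, by simp, hum, huv, hmv, hb.1⟩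
  have hfib : ∀ s ∈ T,
      ((tripleS n).filter
        (fun t => ({t.1, t.2.1, t.2.2} : Finset (ℤ × ℤ)) = s)).card = 2 := by
    intro s hs
    rw [hT, Finset.mem_filter, Finset.mem_powersetCard] at hs
    obtain ⟨⟨hsub, hcard⟩, p, hp, q, hq, r, hr, hpq, hpr, hqr, hcol⟩ := hs
    have hsub' : ({p, q, r} : Finset (ℤ × ℤ)) ⊆ s := by
      simp only [Finset.insert_subset_iff, Finset.singleton_subset_iff]
      exact ⟨hp, hq, hr⟩
    have hs3 : s = ({p, q, r} : Finset (ℤ × ℤ)) := by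
      refine (Finset.eq_of_subset_of_card_le hsub' ?_).symm
      rw [hcard, Finset.card_eq_three.mpr ⟨p, q, r, hpq, hpr, hqr, rfl⟩]
    have hpg : p ∈ gridF n := hsub hp
    have hqg : q ∈ gridF n := hsub hq
    have hrg : r ∈ gridF n := hsub hr
    subst hs3
    rcases middle_exists hpq hpr hqr hcol with hmid | hmid | hmid
    · have hswap : ({p, q, r} : Finset (ℤ × ℤ)) = {q, p, r} := by
        ext w; simp; tauto
      rw [hswap, fiber_eq hqg hpg hrg hmid]
      rw [Finset.card_insert_of_notMem (by
        simp only [Finset.mem_singleton, Prod.mk.injEq, not_and]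
        intro h; exact absurd h hqr), Finset.card_singleton]
    · rw [fiber_eq hpg hqg hrg hmid]
      rw [Finset.card_insert_of_notMem (by
        simp only [Finset.mem_singleton, Prod.mk.injEq, not_and]
        intro h; exact absurd h hpr), Finset.card_singleton]
    · have hswap : ({p, q, r} : Finset (ℤ × ℤ)) = {p, r, q} := by
        ext w; simp; tauto
      rw [hswap, fiber_eq hpg hrg hqg hmid]
      rw [Finset.card_insert_of_notMem (by
        simp only [Finset.mem_singleton, Prod.mk.injEq, not_and]
        intro h; exact absurd h hpq), Finset.card_singleton]
  have h2T : (tripleS n).card = 2 * T.card := by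
    rw [Finset.card_eq_sum_card_fiberwise hmap, Finset.sum_congr rfl hfib,
      Finset.sum_const, smul_eq_mul, mul_comm]
  have hQ : ((tripleS n).card : ℚ)
      = 2 * (2 * ∑ a ∈ Finset.Icc 1 (n - 1), ∑ b ∈ Finset.Icc 1 (n - 1),
          ((n : ℚ) - a) * ((n : ℚ) - b) * (Nat.gcd a b : ℚ)
        - (n : ℚ) ^ 2 * ((n : ℚ) ^ 2 - 1) / 6) := by
    rw [tripleS_card_pairs, grid_pair_sum]
    exact arith n
  rw [h2T] at hQ
  push_cast at hQ
  linarith [hQ]
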